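/- Let J ∈ so(N+2,ℝ) have J_{12}=1, J_{21}=-1, other entries zero, and let ad_J(a) = Ja - aJ on g = so(N+2,ℝ). Then ad_J satisfies the polynomial identity ad_J⁵ + 5 ad_J³ + 4 ad_J = 0, i.e., ad_J(ad_J² + 1)(ad_J² + 4) = 0. -/

import Mathlib

open Matrix

lemma aux_adJ {R : Type*} [Ring R] (J a : R) (d : R → R) (hd : ∀ x, d x = J*x - x*J)
    (h3 : J*J*J = -J) : d (d (d (d (d a)))) + 5 * d (d (d a)) + 4 * d a = 0 := by
  have h4 : J*J*J*J = -(J*J) := by rw [h3]; noncomm_ring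
  have h5 : J*J*J*J*J = J := by rw [h3, neg_mul, neg_mul, h3, neg_neg]
  calc d (d (d (d (d a)))) + 5 * d (d (d a)) + 4 * d a
      = (J*J*J*J*J)*a - 5*((J*J*J*J)*a*J) + 10*((J*J*J)*a*(J*J)) - 10*((J*J)*a*(J*J*J))
          + 5*(J*a*(J*J*J*J)) - a*(J*J*J*J*J)
        + (5*((J*J*J)*a) - 15*((J*J)*a*J) + 15*(J*a*(J*J)) - 5*(a*(J*J*J)))
        + (4*(J*a) - 4*(a*J)) := by simp only [hd]; noncomm_ring
    _ = 0 := by rw [h5, h4, h3]; noncomm_ring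

/-- ad_J satisfies ad_J⁵ + 5 ad_J³ + 4 ad_J = 0 on so(N+2,ℝ). -/
theorem stmt4 (N : ℕ)
    (J : Matrix (Fin (N + 2)) (Fin (N + 2)) ℝ)
    (hJ : J = fun i j => if i = 0 ∧ j = 1 then 1 else if i = 1 ∧ j = 0 then -1 else 0)
    (adJ : Matrix (Fin (N + 2)) (Fin (N + 2)) ℝ → Matrix (Fin (N + 2)) (Fin (N + 2)) ℝ)
    (hadJ : ∀ a, adJ a = J * a - a * J) :
    ∀ a : Matrix (Fin (N + 2)) (Fin (N + 2)) ℝ, aᵀ = -a →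
      adJ (adJ (adJ (adJ (adJ a)))) + (5 : ℝ) • adJ (adJ (adJ a)) + (4 : ℝ) • adJ a = 0 := by
  have hstd : J = single 0 1 (1:ℝ) - single 1 0 1 := by
    subst hJ; ext i j
    simp [Matrix.single, Matrix.sub_apply]
    aesop
  have h3 : J * J * J = -J := by
    rw [hstd]
    simp [sub_mul, mul_sub, Matrix.single_mul_single_same, Matrix.single_mul_single_of_ne]
    abel
  intro a _
  have key := aux_adJ J a adJ hadJ h3
  have h5 : (5 : ℝ) • adJ (adJ (adJ a)) = 5 * adJ (adJ (adJ a)) := by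
    simp [Algebra.smul_def, map_ofNat]
  have h4 : (4 : ℝ) • adJ a = 4 * adJ a := by
    simp [Algebra.smul_def, map_ofNat]
  rw [h5, h4]
  exact key
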